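/- As β→∞, the error exponent E(R,β) converges to E(R,∞) = min_{Q_{XY}} { D(Q_{XY}‖P) + min{ [R−H_Q(X'|Y)]_+ : Q_{X'|Y} a conditional pmf with ε(Q_{X'Y}) ≥ ε(Q_{XY}) } }. -/

import Mathlib

open Real Finset Filter

/-- `Q : X → Y → ℝ` is a joint pmf on `X × Y`. -/
def IsJointPMF {X Y : Type*} [Fintype X] [Fintype Y] (Q : X → Y → ℝ) : Prop :=
  (∀ x y, 0 ≤ Q x y) ∧ ∑ x, ∑ y, Q x y = 1

/-- `Q : Y → X → ℝ` is a conditional pmf from `Y` to `X`. -/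
def IsCondPMF {X Y : Type*} [Fintype X] (Q : Y → X → ℝ) : Prop :=
  (∀ y x, 0 ≤ Q y x) ∧ ∀ y, ∑ x, Q y x = 1

/-- `ε(Q_{XY}) = Σ_{x,y} Q_{XY}(x,y) ln P(x,y)`. -/
noncomputable def epsJ {X Y : Type*} [Fintype X] [Fintype Y] (P Q : X → Y → ℝ) : ℝ :=
  ∑ x, ∑ y, Q x y * Real.log (P x y)

/-- `D(Q‖P) = Σ_{x,y} Q(x,y) ln (Q(x,y)/P(x,y))`. -/
noncomputable def KLdiv {X Y : Type*} [Fintype X] [Fintype Y] (Q P : X → Y → ℝ) : ℝ :=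
  ∑ x, ∑ y, Q x y * Real.log (Q x y / P x y)

/-- The `Y`-marginal `Q_Y(y) = Σ_x Q(x,y)` of a joint pmf `Q`. -/
noncomputable def margY {X Y : Type*} [Fintype X] (Q : X → Y → ℝ) (y : Y) : ℝ := ∑ x, Q x y

/-- `ε(Q_{X'Y}) = Σ_{x,y} Q_Y(y) Q_{X'|Y}(x|y) ln P(x,y)` for a conditional pmf `Qc`
combined with a marginal `Qy`. -/
noncomputable def epsC {X Y : Type*} [Fintype X] [Fintype Y] (P : X → Y → ℝ)
    (Qy : Y → ℝ) (Qc : Y → X → ℝ) : ℝ :=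
  ∑ y, ∑ x, Qy y * Qc y x * Real.log (P x y)

/-- `H_Q(X'|Y) = −Σ_{x,y} Q_Y(y) Q_{X'|Y}(x|y) ln Q_{X'|Y}(x|y)`. -/
noncomputable def entC {X Y : Type*} [Fintype X] [Fintype Y]
    (Qy : Y → ℝ) (Qc : Y → X → ℝ) : ℝ :=
  -∑ y, ∑ x, Qy y * Qc y x * Real.log (Qc y x)

/-- `A(Q_{XY},R,β) = min{[R − H_Q(X'|Y)]_+ :
ε(Q_{X'Y}) + (1/β)[H_Q(X'|Y) − R]_+ ≥ ε(Q_{XY})}`.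
(The constraint set is never empty, since the conditional of `Q_{XY}` itself is feasible.) -/
noncomputable def Afun {X Y : Type*} [Fintype X] [Fintype Y] (P Q : X → Y → ℝ)
    (R β : ℝ) : ℝ :=
  sInf {a : ℝ | ∃ Qc : Y → X → ℝ, IsCondPMF Qc ∧
    epsJ P Q ≤ epsC P (margY Q) Qc + (1 / β) * max (entC (margY Q) Qc - R) 0 ∧
    a = max (R - entC (margY Q) Qc) 0}

/-- The error exponent `E(R,β) = min_{Q_{XY}} [D(Q_{XY}‖P) + A(Q_{XY},R,β)]`. -/
noncomputable def Efun {X Y : Type*} [Fintype X] [Fintype Y] (P : X → Y → ℝ)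
    (R β : ℝ) : ℝ :=
  sInf {e : ℝ | ∃ Q : X → Y → ℝ, IsJointPMF Q ∧ e = KLdiv Q P + Afun P Q R β}

/-- The zero-temperature version `A(Q_{XY},R,∞) = min{[R − H_Q(X'|Y)]_+ :
ε(Q_{X'Y}) ≥ ε(Q_{XY})}`. -/
noncomputable def AfunInf {X Y : Type*} [Fintype X] [Fintype Y] (P Q : X → Y → ℝ)
    (R : ℝ) : ℝ :=
  sInf {a : ℝ | ∃ Qc : Y → X → ℝ, IsCondPMF Qc ∧
    epsJ P Q ≤ epsC P (margY Q) Qc ∧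
    a = max (R - entC (margY Q) Qc) 0}

/-- `E(R,∞) = min_{Q_{XY}} [D(Q_{XY}‖P) + A(Q_{XY},R,∞)]`. -/
noncomputable def EfunInf {X Y : Type*} [Fintype X] [Fintype Y] (P : X → Y → ℝ)
    (R : ℝ) : ℝ :=
  sInf {e : ℝ | ∃ Q : X → Y → ℝ, IsJointPMF Q ∧ e = KLdiv Q P + AfunInf P Q R}


section Helpers

variable {X Y : Type*} [Fintype X] [Fintype Y]

/-- Gibbs' inequality. -/
lemma gibbs_aux {ι : Type*} [Fintype ι] (q p : ι → ℝ) (hq : ∀ i, 0 ≤ q i)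
    (hq1 : ∑ i, q i = 1) (hp : ∀ i, 0 < p i) (hp1 : ∑ i, p i ≤ 1) :
    ∑ i, q i * Real.log (p i) ≤ ∑ i, q i * Real.log (q i) := by
  have key : ∀ i, q i * Real.log (p i) - q i * Real.log (q i) ≤ p i - q i := by
    intro i
    rcases eq_or_lt_of_le (hq i) with h | h
    · simp only [← h, zero_mul, sub_zero, sub_self]
      exact (hp i).le
    · have h1 : q i * Real.log (p i) - q i * Real.log (q i)
          = q i * Real.log (p i / q i) := by
        rw [Real.log_div (hp i).ne' h.ne']; ring
      have h2 : Real.log (p i / q i) ≤ p i / q i - 1 :=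
        Real.log_le_sub_one_of_pos (div_pos (hp i) h)
      calc q i * Real.log (p i) - q i * Real.log (q i)
          = q i * Real.log (p i / q i) := h1
        _ ≤ q i * (p i / q i - 1) := by
            exact mul_le_mul_of_nonneg_left h2 h.le
        _ = p i - q i := by field_simp
  have h3 : ∑ i, (q i * Real.log (p i) - q i * Real.log (q i)) ≤ ∑ i, (p i - q i) :=
    Finset.sum_le_sum (fun i _ => key i)
  rw [Finset.sum_sub_distrib, Finset.sum_sub_distrib, hq1] at h3
  linarith

/-- Entropy is nonpositive sum of `q log q`. -/
lemma sum_mul_log_self_nonpos {ι : Type*} [Fintype ι] (q : ι → ℝ) (hq : ∀ i, 0 ≤ q i)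
    (hq1 : ∑ i, q i = 1) : ∑ i, q i * Real.log (q i) ≤ 0 := by
  apply Finset.sum_nonpos
  intro i _
  apply Real.mul_log_nonpos (hq i)
  calc q i ≤ ∑ j, q j := Finset.single_le_sum (fun j _ => hq j) (Finset.mem_univ i)
    _ = 1 := hq1

/-- Entropy is at most `log` of the cardinality. -/
lemma neg_sum_mul_log_le {ι : Type*} [Fintype ι] [Nonempty ι] (q : ι → ℝ)
    (hq : ∀ i, 0 ≤ q i) (hq1 : ∑ i, q i = 1) :
    -∑ i, q i * Real.log (q i) ≤ Real.log (Fintype.card ι) := by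
  have hcard : (0 : ℝ) < Fintype.card ι := by
    exact_mod_cast Fintype.card_pos
  have h := gibbs_aux q (fun _ => ((Fintype.card ι : ℝ))⁻¹) hq hq1
    (fun _ => inv_pos.mpr hcard) (by
      rw [Finset.sum_const, Finset.card_univ, nsmul_eq_mul]
      rw [mul_inv_cancel₀ hcard.ne'])
  have h2 : ∑ i, q i * Real.log ((Fintype.card ι : ℝ))⁻¹
      = -Real.log (Fintype.card ι) := by
    rw [← Finset.sum_mul, hq1, one_mul, Real.log_inv]
  linarith

lemma margY_nonneg {Q : X → Y → ℝ} (hQ : IsJointPMF Q) (y : Y) : 0 ≤ margY Q y :=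
  Finset.sum_nonneg fun x _ => hQ.1 x y

lemma margY_sum {Q : X → Y → ℝ} (hQ : IsJointPMF Q) : ∑ y, margY Q y = 1 := by
  rw [← hQ.2, Finset.sum_comm]
  rfl

lemma entC_eq (Qy : Y → ℝ) (Qc : Y → X → ℝ) :
    entC Qy Qc = ∑ y, ∑ x, Qy y * Real.negMulLog (Qc y x) := by
  unfold entC
  have : ∀ y x, Qy y * Real.negMulLog (Qc y x) = -(Qy y * Qc y x * Real.log (Qc y x)) := by
    intro y x; simp [Real.negMulLog]; ring
  simp_rw [this, Finset.sum_neg_distrib]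

lemma entC_nonneg {Qy : Y → ℝ} {Qc : Y → X → ℝ} (hQy : ∀ y, 0 ≤ Qy y)
    (hQc : IsCondPMF Qc) : 0 ≤ entC Qy Qc := by
  rw [entC_eq]
  apply Finset.sum_nonneg; intro y _
  apply Finset.sum_nonneg; intro x _
  apply mul_nonneg (hQy y)
  apply Real.negMulLog_nonneg (hQc.1 y x)
  calc Qc y x ≤ ∑ x', Qc y x' := Finset.single_le_sum (fun x' _ => hQc.1 y x')
        (Finset.mem_univ x)
    _ = 1 := hQc.2 y

lemma entC_le [Nonempty X] {Qy : Y → ℝ} {Qc : Y → X → ℝ} (hQy : ∀ y, 0 ≤ Qy y)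
    (hQy1 : ∑ y, Qy y = 1) (hQc : IsCondPMF Qc) :
    entC Qy Qc ≤ Real.log (Fintype.card X) := by
  have hn : (0:ℝ) ≤ Real.log (Fintype.card X) := by
    apply Real.log_nonneg; exact_mod_cast Fintype.card_pos
  have hyb : ∀ y, -∑ x, Qc y x * Real.log (Qc y x) ≤ Real.log (Fintype.card X) :=
    fun y => neg_sum_mul_log_le (Qc y) (hQc.1 y) (hQc.2 y)
  unfold entC
  have : ∀ y, -(∑ x, Qy y * Qc y x * Real.log (Qc y x))
      ≤ Qy y * Real.log (Fintype.card X) := by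
    intro y
    have : ∑ x, Qy y * Qc y x * Real.log (Qc y x)
        = Qy y * ∑ x, Qc y x * Real.log (Qc y x) := by
      rw [Finset.mul_sum]; congr 1; ext x; ring
    rw [this]
    calc -(Qy y * ∑ x, Qc y x * Real.log (Qc y x))
        = Qy y * (-∑ x, Qc y x * Real.log (Qc y x)) := by ring
      _ ≤ Qy y * Real.log (Fintype.card X) :=
          mul_le_mul_of_nonneg_left (hyb y) (hQy y)
  calc -∑ y, ∑ x, Qy y * Qc y x * Real.log (Qc y x)
      = ∑ y, -(∑ x, Qy y * Qc y x * Real.log (Qc y x)) := by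
        rw [Finset.sum_neg_distrib]
    _ ≤ ∑ y, Qy y * Real.log (Fintype.card X) := Finset.sum_le_sum fun y _ => this y
    _ = Real.log (Fintype.card X) := by rw [← Finset.sum_mul, hQy1, one_mul]

/-- Pointwise rewriting of the KL integrand. -/
lemma klterm_eq {q p : ℝ} (hq : 0 ≤ q) (hp : 0 < p) :
    q * Real.log (q / p) = q * Real.log q - q * Real.log p := by
  rcases eq_or_lt_of_le hq with h | h
  · simp [← h]
  · rw [Real.log_div h.ne' hp.ne']; ring

lemma KLdiv_eq {Q : X → Y → ℝ} (hQ : ∀ x y, 0 ≤ Q x y) {P : X → Y → ℝ}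
    (hP : ∀ x y, 0 < P x y) :
    KLdiv Q P = (∑ x, ∑ y, Q x y * Real.log (Q x y)) - epsJ P Q := by
  unfold KLdiv epsJ
  rw [← Finset.sum_sub_distrib]
  apply Finset.sum_congr rfl; intro x _
  rw [← Finset.sum_sub_distrib]
  apply Finset.sum_congr rfl; intro y _
  exact klterm_eq (hQ x y) (hP x y)

lemma KLdiv_nonneg {Q P : X → Y → ℝ} (hQ : IsJointPMF Q) (hP : ∀ x y, 0 < P x y)
    (hP1 : ∑ x, ∑ y, P x y = 1) : 0 ≤ KLdiv Q P := by
  rw [KLdiv_eq hQ.1 hP]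
  have := gibbs_aux (ι := X × Y) (fun p => Q p.1 p.2) (fun p => P p.1 p.2)
    (fun p => hQ.1 p.1 p.2)
    (by rw [Fintype.sum_prod_type]; exact hQ.2)
    (fun p => hP p.1 p.2)
    (by rw [Fintype.sum_prod_type]; exact hP1.le)
  rw [Fintype.sum_prod_type, Fintype.sum_prod_type] at this
  unfold epsJ
  linarith

/-- The conditional pmf of a joint pmf. -/
lemma exists_cond [Nonempty X] (P : X → Y → ℝ) {Q : X → Y → ℝ} (hQ : IsJointPMF Q) :
    ∃ Qc : Y → X → ℝ, IsCondPMF Qc ∧ epsC P (margY Q) Qc = epsJ P Q := by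
  classical
  refine ⟨fun y x => if margY Q y = 0 then ((Fintype.card X : ℝ))⁻¹
    else Q x y / margY Q y, ⟨?_, ?_⟩, ?_⟩
  · intro y x
    dsimp only
    split_ifs with h
    · positivity
    · exact div_nonneg (hQ.1 x y) (margY_nonneg hQ y)
  · intro y
    dsimp only
    split_ifs with h
    · rw [Finset.sum_const, Finset.card_univ, nsmul_eq_mul]
      rw [mul_inv_cancel₀]
      exact_mod_cast Fintype.card_pos.ne'
    · rw [← Finset.sum_div]
      exact div_self h
  · unfold epsC epsJ
    rw [Finset.sum_comm]
    apply Finset.sum_congr rfl; intro x _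
    apply Finset.sum_congr rfl; intro y _
    dsimp only
    split_ifs with h
    · have hx : Q x y = 0 := by
        have h1 : Q x y ≤ margY Q y :=
          Finset.single_le_sum (fun x' _ => hQ.1 x' y) (Finset.mem_univ x)
        exact le_antisymm (h ▸ h1) (hQ.1 x y)
      simp [hx, h]
    · field_simp

end Helpers

section SetLemmas

variable {X Y : Type*} [Fintype X] [Fintype Y]

lemma AInfSet_nonneg (P Q : X → Y → ℝ) (R : ℝ) :
    ∀ a ∈ {a : ℝ | ∃ Qc : Y → X → ℝ, IsCondPMF Qc ∧
      epsJ P Q ≤ epsC P (margY Q) Qc ∧ a = max (R - entC (margY Q) Qc) 0}, 0 ≤ a := by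
  rintro a ⟨Qc, _, _, rfl⟩; exact le_max_right _ _

lemma ASet_nonneg (P Q : X → Y → ℝ) (R β : ℝ) :
    ∀ a ∈ {a : ℝ | ∃ Qc : Y → X → ℝ, IsCondPMF Qc ∧
      epsJ P Q ≤ epsC P (margY Q) Qc + (1 / β) * max (entC (margY Q) Qc - R) 0 ∧
      a = max (R - entC (margY Q) Qc) 0}, 0 ≤ a := by
  rintro a ⟨Qc, _, _, rfl⟩; exact le_max_right _ _

lemma AfunInf_nonneg (P Q : X → Y → ℝ) (R : ℝ) : 0 ≤ AfunInf P Q R :=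
  Real.sInf_nonneg (AInfSet_nonneg P Q R)

lemma Afun_nonneg (P Q : X → Y → ℝ) (R β : ℝ) : 0 ≤ Afun P Q R β :=
  Real.sInf_nonneg (ASet_nonneg P Q R β)

lemma AInfSet_nonempty [Nonempty X] (P : X → Y → ℝ) {Q : X → Y → ℝ}
    (hQ : IsJointPMF Q) :
    Set.Nonempty {a : ℝ | ∃ Qc : Y → X → ℝ, IsCondPMF Qc ∧
      epsJ P Q ≤ epsC P (margY Q) Qc ∧ a = max (R - entC (margY Q) Qc) 0} := by
  obtain ⟨Qc, hQc, heq⟩ := exists_cond P hQ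
  exact ⟨max (R - entC (margY Q) Qc) 0, Qc, hQc, heq.ge, rfl⟩

lemma ASet_nonempty [Nonempty X] (P : X → Y → ℝ) {Q : X → Y → ℝ}
    (hQ : IsJointPMF Q) {β : ℝ} (hβ : 0 < β) :
    Set.Nonempty {a : ℝ | ∃ Qc : Y → X → ℝ, IsCondPMF Qc ∧
      epsJ P Q ≤ epsC P (margY Q) Qc + (1 / β) * max (entC (margY Q) Qc - R) 0 ∧
      a = max (R - entC (margY Q) Qc) 0} := by
  obtain ⟨Qc, hQc, heq⟩ := exists_cond P hQ
  refine ⟨max (R - entC (margY Q) Qc) 0, Qc, hQc, ?_, rfl⟩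
  have h1 : 0 ≤ (1 / β) * max (entC (margY Q) Qc - R) 0 :=
    mul_nonneg (by positivity) (le_max_right _ _)
  linarith [heq.ge]

lemma Afun_le_AfunInf [Nonempty X] (P : X → Y → ℝ) {Q : X → Y → ℝ}
    (hQ : IsJointPMF Q) (R : ℝ) {β : ℝ} (hβ : 0 < β) :
    Afun P Q R β ≤ AfunInf P Q R := by
  apply csInf_le_csInf ⟨0, fun a ha => ASet_nonneg P Q R β a ha⟩
    (AInfSet_nonempty P hQ)
  rintro a ⟨Qc, hQc, hfeas, rfl⟩
  refine ⟨Qc, hQc, ?_, rfl⟩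
  have h1 : 0 ≤ (1 / β) * max (entC (margY Q) Qc - R) 0 :=
    mul_nonneg (by positivity) (le_max_right _ _)
  linarith

lemma ESet_bddBelow {P : X → Y → ℝ} (hpos : ∀ x y, 0 < P x y)
    (hsum : ∑ x, ∑ y, P x y = 1) (R β : ℝ) :
    BddBelow {e : ℝ | ∃ Q : X → Y → ℝ, IsJointPMF Q ∧ e = KLdiv Q P + Afun P Q R β} := by
  refine ⟨0, ?_⟩
  rintro e ⟨Q, hQ, rfl⟩
  have h1 := KLdiv_nonneg hQ hpos hsum
  have h2 := Afun_nonneg P Q R β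
  linarith

lemma EInfSet_bddBelow {P : X → Y → ℝ} (hpos : ∀ x y, 0 < P x y)
    (hsum : ∑ x, ∑ y, P x y = 1) (R : ℝ) :
    BddBelow {e : ℝ | ∃ Q : X → Y → ℝ, IsJointPMF Q ∧ e = KLdiv Q P + AfunInf P Q R} := by
  refine ⟨0, ?_⟩
  rintro e ⟨Q, hQ, rfl⟩
  have h1 := KLdiv_nonneg hQ hpos hsum
  have h2 := AfunInf_nonneg P Q R
  linarith

lemma Efun_le_EfunInf [Nonempty X] {P : X → Y → ℝ} (hpos : ∀ x y, 0 < P x y)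
    (hsum : ∑ x, ∑ y, P x y = 1) (R : ℝ) {β : ℝ} (hβ : 0 < β) :
    Efun P R β ≤ EfunInf P R := by
  unfold EfunInf
  refine le_csInf ⟨KLdiv P P + AfunInf P P R, ⟨P, ⟨fun x y => (hpos x y).le, hsum⟩, rfl⟩⟩ ?_
  rintro e ⟨Q, hQ, rfl⟩
  have h1 : Afun P Q R β ≤ AfunInf P Q R := Afun_le_AfunInf P hQ R hβ
  have h2 : Efun P R β ≤ KLdiv Q P + Afun P Q R β :=
    csInf_le (ESet_bddBelow hpos hsum R β) ⟨Q, hQ, rfl⟩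
  linarith

end SetLemmas

section CaseA

variable {X Y : Type*} [Fintype X] [Fintype Y]

lemma caseA_eq [Nonempty X] (P : X → Y → ℝ) (hA : ∀ x x' y, P x y = P x' y) (R : ℝ)
    {β : ℝ} (hβ : 0 < β) : Efun P R β = EfunInf P R := by
  have hAfun : ∀ Q : X → Y → ℝ, IsJointPMF Q → Afun P Q R β = AfunInf P Q R := by
    intro Q hQ
    have hCE : ∀ Qc : Y → X → ℝ, IsCondPMF Qc → epsC P (margY Q) Qc = epsJ P Q := by
      intro Qc hQc
      have h1 : epsC P (margY Q) Qc
          = ∑ y, margY Q y * Real.log (P (Classical.arbitrary X) y) := by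
        unfold epsC
        apply Finset.sum_congr rfl; intro y _
        have hterm : ∀ x, margY Q y * Qc y x * Real.log (P x y)
            = (margY Q y * Real.log (P (Classical.arbitrary X) y)) * Qc y x := by
          intro x; rw [hA x (Classical.arbitrary X) y]; ring
        rw [Finset.sum_congr rfl (fun x _ => hterm x), ← Finset.mul_sum, hQc.2 y, mul_one]
      have h2 : epsJ P Q
          = ∑ y, margY Q y * Real.log (P (Classical.arbitrary X) y) := by
        unfold epsJ
        rw [Finset.sum_comm]
        apply Finset.sum_congr rfl; intro y _
        unfold margY
        rw [Finset.sum_mul]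
        apply Finset.sum_congr rfl; intro x _
        rw [hA x (Classical.arbitrary X) y]
      rw [h1, h2]
    unfold Afun AfunInf
    congr 1
    ext a
    constructor
    · rintro ⟨Qc, hQc, _, rfl⟩
      exact ⟨Qc, hQc, (hCE Qc hQc).ge, rfl⟩
    · rintro ⟨Qc, hQc, _, rfl⟩
      refine ⟨Qc, hQc, ?_, rfl⟩
      have h1 : 0 ≤ (1 / β) * max (entC (margY Q) Qc - R) 0 :=
        mul_nonneg (by positivity) (le_max_right _ _)
      linarith [(hCE Qc hQc).ge]
  unfold Efun EfunInf
  congr 1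
  ext e
  constructor
  · rintro ⟨Q, hQ, rfl⟩
    exact ⟨Q, hQ, by rw [hAfun Q hQ]⟩
  · rintro ⟨Q, hQ, rfl⟩
    exact ⟨Q, hQ, by rw [hAfun Q hQ]⟩

end CaseA

section MainLower

variable {X Y : Type*} [Fintype X] [Fintype Y]

lemma main_lower [Nonempty X] {P : X → Y → ℝ} (hpos : ∀ x y, 0 < P x y)
    (hsum : ∑ x, ∑ y, P x y = 1) (R : ℝ)
    (x0 x1 : X) (y0 : Y) (hG : P x0 y0 < P x1 y0)
    {β lam : ℝ} (hβ : 0 < β) (hl0 : 0 < lam) (hl1 : lam < 1)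
    (hkey : (1 - lam) * ((max (Real.log (Fintype.card X) - R) 0 + 1) / β)
      ≤ lam * (Real.log (P x1 y0) - Real.log (P x0 y0))) :
    EfunInf P R ≤ Efun P R β
      + lam * (Real.log (Fintype.card X) - Real.log (P x0 y0)) := by
  classical
  set n := Real.log (Fintype.card X) with hn
  have hn0 : 0 ≤ n := Real.log_nonneg (by exact_mod_cast Fintype.card_pos)
  set δ := (max (n - R) 0 + 1) / β with hδ
  have hδ0 : 0 < δ := by positivity
  clear_value δ
  clear_value n
  have hEle : ∀ e ∈ {e : ℝ | ∃ Q : X → Y → ℝ, IsJointPMF Q ∧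
      e = KLdiv Q P + Afun P Q R β},
      EfunInf P R - lam * (n - Real.log (P x0 y0)) ≤ e := by
    rintro e ⟨Q, hQ, rfl⟩
    rw [sub_le_iff_le_add]
    have : EfunInf P R
        ≤ KLdiv Q P + Afun P Q R β + lam * (n - Real.log (P x0 y0)) := by
      apply le_of_forall_pos_le_add
      intro ε hε
      obtain ⟨a, haS, halt⟩ := Real.lt_sInf_add_pos (ASet_nonempty (R := R) P hQ hβ) hε
      obtain ⟨Qc, hQc, hfeas, rfl⟩ := haS
      -- the perturbed joint distribution and conditional
      set m := margY Q y0 with hm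
      have hm0 : 0 ≤ m := margY_nonneg hQ y0
      set s := (1 - lam) * m + lam with hs
      have hs0 : 0 < s := by nlinarith
      set Q' : X → Y → ℝ := fun x y =>
        (1 - lam) * Q x y + lam * (if x = x0 then (if y = y0 then 1 else 0) else 0)
        with hQ'def
      set Qc' : Y → X → ℝ := fun y x => if y = y0 then
        ((1 - lam) * m * Qc y0 x + lam * (if x = x1 then 1 else 0)) / s else Qc y x
        with hQc'def
      clear_value Qc'
      clear_value Q'
      clear_value s
      clear_value m
      have hQ'pos : ∀ x y, 0 ≤ Q' x y := by
        intro x y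
        simp only [hQ'def]
        have := hQ.1 x y
        split_ifs <;> nlinarith
      have hQ'pmf : IsJointPMF Q' := by
        refine ⟨hQ'pos, ?_⟩
        simp only [hQ'def]
        rw [show (∑ x, ∑ y, ((1 - lam) * Q x y
            + lam * (if x = x0 then (if y = y0 then (1:ℝ) else 0) else 0)))
          = (1 - lam) * (∑ x, ∑ y, Q x y)
            + lam * (∑ x, ∑ y, (if x = x0 then (if y = y0 then (1:ℝ) else 0) else 0))
          from by simp only [Finset.sum_add_distrib, Finset.mul_sum]]
        rw [hQ.2]
        simp [Finset.sum_ite_eq']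
      have hmarg : ∀ y, margY Q' y
          = (1 - lam) * margY Q y + lam * (if y = y0 then 1 else 0) := by
        intro y
        unfold margY
        simp only [hQ'def]
        rw [Finset.sum_add_distrib, ← Finset.mul_sum, ← Finset.mul_sum]
        congr 2
        simp [Finset.sum_ite_eq']
      have hmargy0 : margY Q' y0 = s := by rw [hmarg]; simp [hs, hm]
      have hmargne : ∀ y, y ≠ y0 → margY Q' y = (1 - lam) * margY Q y := by
        intro y hy; rw [hmarg]; simp [hy]
      have hQc'row : ∀ x, Qc' y0 x
          = ((1 - lam) * m * Qc y0 x + lam * (if x = x1 then 1 else 0)) / s := by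
        intro x; simp only [hQc'def, if_pos rfl]
      have hQc'ne : ∀ y, y ≠ y0 → ∀ x, Qc' y x = Qc y x := by
        intro y hy x; simp only [hQc'def, if_neg hy]
      have hQc'pmf : IsCondPMF Qc' := by
        constructor
        · intro y x
          simp only [hQc'def]
          split_ifs with h1 h2
          · apply div_nonneg _ hs0.le
            have h1' := mul_nonneg (mul_nonneg (by linarith : (0:ℝ) ≤ 1 - lam) hm0)
              (hQc.1 y0 x)
            nlinarith
          · apply div_nonneg _ hs0.le
            have h1' := mul_nonneg (mul_nonneg (by linarith : (0:ℝ) ≤ 1 - lam) hm0)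
              (hQc.1 y0 x)
            nlinarith
          · exact hQc.1 y x
        · intro y
          by_cases hy : y = y0
          · subst hy
            rw [Finset.sum_congr rfl (fun x _ => hQc'row x), ← Finset.sum_div]
            rw [Finset.sum_add_distrib, ← Finset.mul_sum, hQc.2, ← Finset.mul_sum]
            rw [show (∑ x, if x = x1 then (1:ℝ) else 0) = 1 from by
              simp [Finset.sum_ite_eq']]
            rw [mul_one, mul_one, ← hs, div_self hs0.ne']
          · rw [Finset.sum_congr rfl (fun x _ => hQc'ne y hy x)]
            exact hQc.2 y
      have hepsJ' : epsJ P Q' = (1 - lam) * epsJ P Q + lam * Real.log (P x0 y0) := by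
        unfold epsJ
        simp only [hQ'def]
        have hterm : ∀ x y, ((1 - lam) * Q x y
            + lam * (if x = x0 then (if y = y0 then (1:ℝ) else 0) else 0))
            * Real.log (P x y)
            = (1 - lam) * (Q x y * Real.log (P x y))
              + (if x = x0 then (if y = y0 then lam * Real.log (P x0 y0) else 0) else 0) := by
          intro x y
          split_ifs with h1 h2
          · subst h1; subst h2; ring
          · ring
          · ring
        simp_rw [hterm]
        rw [show (∑ x, ∑ y, ((1 - lam) * (Q x y * Real.log (P x y))
            + (if x = x0 then (if y = y0 then lam * Real.log (P x0 y0) else 0) else 0)))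
          = (1 - lam) * (∑ x, ∑ y, Q x y * Real.log (P x y))
            + (∑ x, ∑ y, (if x = x0 then (if y = y0 then lam * Real.log (P x0 y0) else 0) else 0))
          from by simp only [Finset.sum_add_distrib, Finset.mul_sum]]
        congr 1
        simp [Finset.sum_ite_eq']
      have hepsC' : epsC P (margY Q') Qc'
          = (1 - lam) * epsC P (margY Q) Qc + lam * Real.log (P x1 y0) := by
        unfold epsC
        have hterm : ∀ y, (∑ x, margY Q' y * Qc' y x * Real.log (P x y))
            = (1 - lam) * (∑ x, margY Q y * Qc y x * Real.log (P x y))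
              + (if y = y0 then lam * Real.log (P x1 y0) else 0) := by
          intro y
          by_cases hy : y = y0
          · rw [if_pos hy, hy]
            have hx : ∀ x, margY Q' y0 * Qc' y0 x * Real.log (P x y0)
                = (1 - lam) * (margY Q y0 * Qc y0 x * Real.log (P x y0))
                  + (if x = x1 then lam * Real.log (P x1 y0) else 0) := by
              intro x
              rw [hmargy0, hQc'row x, ← mul_div_assoc, mul_comm s,
                mul_div_assoc, div_self hs0.ne', mul_one]
              split_ifs with h1
              · subst h1; rw [← hm]; ring
              · rw [← hm]; ring
            rw [Finset.sum_congr rfl (fun x _ => hx x), Finset.sum_add_distrib,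
              ← Finset.mul_sum]
            congr 1
            simp [Finset.sum_ite_eq']
          · rw [if_neg hy, add_zero, Finset.mul_sum]
            apply Finset.sum_congr rfl; intro x _
            rw [hmargne y hy, hQc'ne y hy x]; ring
        rw [Finset.sum_congr rfl (fun y _ => hterm y), Finset.sum_add_distrib,
          ← Finset.mul_sum]
        congr 1
        simp [Finset.sum_ite_eq']
      have hent : (1 - lam) * entC (margY Q) Qc ≤ entC (margY Q') Qc' := by
        rw [entC_eq, entC_eq, Finset.mul_sum]
        apply Finset.sum_le_sum
        intro y _
        by_cases hy : y = y0
        · rw [hy, hmargy0, Finset.mul_sum]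
          apply Finset.sum_le_sum
          intro x _
          have hxmem : Qc y0 x ∈ Set.Ici (0:ℝ) := hQc.1 y0 x
          have hdmem : (if x = x1 then (1:ℝ) else 0) ∈ Set.Ici (0:ℝ) := by
            split_ifs <;> norm_num
          have hw1 : (0:ℝ) ≤ (1 - lam) * m / s :=
            div_nonneg (mul_nonneg (by linarith) hm0) hs0.le
          have hw2 : (0:ℝ) ≤ lam / s := div_nonneg hl0.le hs0.le
          have hw : (1 - lam) * m / s + lam / s = 1 := by
            field_simp
            linarith [hs]
          have hcon := Real.concaveOn_negMulLog.2 hxmem hdmem hw1 hw2 hw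
          have hd0 : Real.negMulLog (if x = x1 then (1:ℝ) else 0) = 0 := by
            split_ifs <;> simp
          rw [smul_eq_mul, smul_eq_mul, smul_eq_mul, smul_eq_mul, hd0, mul_zero,
            add_zero] at hcon
          have harg : (1 - lam) * m / s * Qc y0 x + lam / s * (if x = x1 then (1:ℝ) else 0)
              = ((1 - lam) * m * Qc y0 x + lam * (if x = x1 then 1 else 0)) / s := by
            field_simp
          rw [harg] at hcon
          rw [hQc'row x, ← hm]
          calc (1 - lam) * (m * Real.negMulLog (Qc y0 x))
              = s * ((1 - lam) * m / s * Real.negMulLog (Qc y0 x)) := by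
                field_simp
            _ ≤ s * Real.negMulLog
                (((1 - lam) * m * Qc y0 x + lam * (if x = x1 then 1 else 0)) / s) :=
                mul_le_mul_of_nonneg_left hcon hs0.le
        · apply le_of_eq
          rw [hmargne y hy, Finset.mul_sum]
          apply Finset.sum_congr rfl; intro x _
          rw [hQc'ne y hy x]; ring
      have hQ'lnQ' : ∑ x, ∑ y, Q' x y * Real.log (Q' x y)
          ≤ (1 - lam) * ∑ x, ∑ y, Q x y * Real.log (Q x y) := by
        rw [Finset.mul_sum]
        apply Finset.sum_le_sum
        intro x _
        rw [Finset.mul_sum]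
        apply Finset.sum_le_sum
        intro y _
        have hqmem : Q x y ∈ Set.Ici (0:ℝ) := hQ.1 x y
        have hdmem : (if x = x0 then (if y = y0 then (1:ℝ) else 0) else 0)
            ∈ Set.Ici (0:ℝ) := by split_ifs <;> norm_num
        have hw1 : (0:ℝ) ≤ 1 - lam := by linarith
        have hcon := Real.concaveOn_negMulLog.2 hqmem hdmem hw1 hl0.le
          (by ring : (1 - lam) + lam = 1)
        have hd0 : Real.negMulLog (if x = x0 then (if y = y0 then (1:ℝ) else 0) else 0)
            = 0 := by split_ifs <;> simp
        rw [smul_eq_mul, smul_eq_mul, smul_eq_mul, smul_eq_mul, hd0, mul_zero,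
          add_zero] at hcon
        have hQ'xy : Q' x y = (1 - lam) * Q x y
            + lam * (if x = x0 then (if y = y0 then 1 else 0) else 0) := by
          simp only [hQ'def]
        rw [hQ'xy]
        have h1 : Q' x y * Real.log (Q' x y) = -Real.negMulLog (Q' x y) := by
          simp [Real.negMulLog]
        have h2 : Q x y * Real.log (Q x y) = -Real.negMulLog (Q x y) := by
          simp [Real.negMulLog]
        rw [hQ'xy] at h1
        rw [h1, h2]
        linarith
      have hKL' : KLdiv Q' P ≤ (1 - lam) * KLdiv Q P - lam * Real.log (P x0 y0) := by
        rw [KLdiv_eq hQ'pos hpos, KLdiv_eq hQ.1 hpos, hepsJ']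
        linarith
      have hentub : entC (margY Q) Qc ≤ n := by
        rw [hn]; exact entC_le (margY_nonneg hQ) (margY_sum hQ) hQc
      have hfeasnum : epsJ P Q ≤ epsC P (margY Q) Qc + δ := by
        have h3 : (1 / β) * max (entC (margY Q) Qc - R) 0 ≤ δ := by
          have hnum : max (entC (margY Q) Qc - R) 0 ≤ max (n - R) 0 + 1 := by
            apply max_le
            · have h := le_max_left (n - R) (0:ℝ); linarith
            · have h := le_max_right (n - R) (0:ℝ); linarith
          calc (1 / β) * max (entC (margY Q) Qc - R) 0
              ≤ (1 / β) * (max (n - R) 0 + 1) :=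
                mul_le_mul_of_nonneg_left hnum (by positivity)
            _ = δ := by rw [hδ]; ring
        linarith
      have hfeas' : epsJ P Q' ≤ epsC P (margY Q') Qc' := by
        rw [hepsJ', hepsC']
        have h4 : -δ ≤ epsC P (margY Q) Qc - epsJ P Q := by linarith
        have h5 : (1 - lam) * (-δ) ≤ (1 - lam) * (epsC P (margY Q) Qc - epsJ P Q) :=
          mul_le_mul_of_nonneg_left h4 (by linarith)
        have h6 := hkey
        linarith
      have he0 : 0 ≤ entC (margY Q) Qc := entC_nonneg (margY_nonneg hQ) hQc
      have hobj : max (R - entC (margY Q') Qc') 0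
          ≤ max (R - entC (margY Q) Qc) 0 + lam * n := by
        apply max_le
        · have h7 : lam * entC (margY Q) Qc ≤ lam * n :=
            mul_le_mul_of_nonneg_left hentub hl0.le
          have h8 : R - entC (margY Q) Qc ≤ max (R - entC (margY Q) Qc) 0 :=
            le_max_left _ _
          linarith [hent]
        · have : 0 ≤ lam * n := mul_nonneg hl0.le hn0
          linarith [le_max_right (R - entC (margY Q) Qc) 0]
      have hAInf' : AfunInf P Q' R ≤ max (R - entC (margY Q') Qc') 0 := by
        unfold AfunInf
        exact csInf_le ⟨0, fun a ha => AInfSet_nonneg P Q' R a ha⟩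
          ⟨Qc', hQc'pmf, hfeas', rfl⟩
      have hEInf : EfunInf P R ≤ KLdiv Q' P + AfunInf P Q' R := by
        unfold EfunInf
        exact csInf_le (EInfSet_bddBelow hpos hsum R) ⟨Q', hQ'pmf, rfl⟩
      have hKLnn := KLdiv_nonneg hQ hpos hsum
      have h9 : 0 ≤ lam * KLdiv Q P := mul_nonneg hl0.le hKLnn
      have halt2 : max (R - entC (margY Q) Qc) 0 < Afun P Q R β + ε := by
        unfold Afun; exact halt
      linarith [hEInf, hAInf', hKL', hobj, halt2]
    linarith
  have hne : Set.Nonempty {e : ℝ | ∃ Q : X → Y → ℝ, IsJointPMF Q ∧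
      e = KLdiv Q P + Afun P Q R β} :=
    ⟨KLdiv P P + Afun P P R β, P, ⟨fun x y => (hpos x y).le, hsum⟩, rfl⟩
  have hfin := le_csInf hne hEle
  unfold Efun
  linarith

end MainLower

/-- as `β → ∞`, the error exponent `E(R,β)` converges to `E(R,∞)`. -/
theorem stmt12 {X Y : Type*} [Fintype X] [Fintype Y]
    (P : X → Y → ℝ) (hpos : ∀ x y, 0 < P x y) (hsum : ∑ x, ∑ y, P x y = 1) (R : ℝ) :
    Tendsto (fun β : ℝ => Efun P R β) atTop (nhds (EfunInf P R)) := by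
  have hX : Nonempty X := by
    by_contra h
    rw [not_nonempty_iff] at h
    rw [Finset.univ_eq_empty, Finset.sum_empty] at hsum
    exact one_ne_zero hsum.symm
  by_cases hA : ∀ x x' y, P x y = P x' y
  · apply Tendsto.congr' _ tendsto_const_nhds
    filter_upwards [eventually_ge_atTop (1:ℝ)] with β hβ
    exact (caseA_eq P hA R (lt_of_lt_of_le one_pos hβ)).symm
  · push_neg at hA
    obtain ⟨x, x', y0, hne⟩ := hA
    obtain ⟨x0, x1, hG⟩ : ∃ x0 x1 : X, P x0 y0 < P x1 y0 := by
      rcases lt_or_gt_of_ne hne with h | h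
      exacts [⟨x, x', h⟩, ⟨x', x, h⟩]
    set C := max (Real.log (Fintype.card X) - R) 0 + 1 with hC
    have hC0 : 0 < C := by positivity
    set G := Real.log (P x1 y0) - Real.log (P x0 y0) with hGdef
    have hG0 : 0 < G := by
      have := Real.log_lt_log (hpos x0 y0) hG
      rw [hGdef]; linarith
    set K := Real.log (Fintype.card X) - Real.log (P x0 y0) with hK
    set lam : ℝ → ℝ := fun β => (C / β) / (C / β + G) with hlam
    have hdiv : Tendsto (fun β : ℝ => C / β) atTop (nhds 0) :=
      Tendsto.const_div_atTop tendsto_id C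
    have hlam_t : Tendsto lam atTop (nhds 0) := by
      have h2 : Tendsto (fun β : ℝ => C / β + G) atTop (nhds (0 + G)) :=
        hdiv.add tendsto_const_nhds
      have h3 := hdiv.div h2 (by simpa using hG0.ne')
      rw [zero_div] at h3; exact h3
    have hEt : Tendsto (fun β : ℝ => EfunInf P R - lam β * K) atTop
        (nhds (EfunInf P R)) := by
      have h4 : Tendsto (fun _ : ℝ => EfunInf P R) atTop (nhds (EfunInf P R)) :=
        tendsto_const_nhds
      have h5 := h4.sub (hlam_t.mul_const K)
      simpa using h5
    apply tendsto_of_tendsto_of_tendsto_of_le_of_le' hEt tendsto_const_nhds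
    · filter_upwards [eventually_gt_atTop (0:ℝ)] with β hβ
      have hd0 : 0 < C / β := div_pos hC0 hβ
      have hden : 0 < C / β + G := by linarith
      have hl0 : 0 < lam β := div_pos hd0 hden
      have hl1 : lam β < 1 := by
        rw [hlam]
        exact (div_lt_one hden).mpr (by linarith)
      have hkey0 : (1 - lam β) * (C / β) ≤ lam β * G := by
        rw [hlam]
        have : (1 - (C / β) / (C / β + G)) * (C / β) = ((C / β) / (C / β + G)) * G := by
          field_simp
          ring
        rw [this]
      have hkey : (1 - lam β) * ((max (Real.log (Fintype.card X) - R) 0 + 1) / β)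
          ≤ lam β * (Real.log (P x1 y0) - Real.log (P x0 y0)) := by
        rw [← hC, ← hGdef]
        exact hkey0
      have hml := main_lower hpos hsum R x0 x1 y0 hG hβ hl0 hl1 hkey
      rw [← hK] at hml
      linarith
    · filter_upwards [eventually_gt_atTop (0:ℝ)] with β hβ
      exact Efun_le_EfunInf hpos hsum R hβ
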